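/- Let T be a finite rooted tree in which every node v is labeled by a nonempty finite set S(v) of size at most k, drawn from some ambient set X, satisfying the 'laminar-path' condition: for any three nodes u, v, w on a root-to-leaf path listed in order from leaf toward root (u below v below w), S(u) ∩ S(w) ⊆ S(u) ∩ S(v). Fix Z ∈ ℕ and suppose some root-to-leaf path contains Z^k consecutive nodes v_1, ..., v_{Z^k} (each the parent of the previous) such that the intersection of all S(v_i) is nonempty. Then there exist Z nodes among v_1, ..., v_{Z^k} and a set S₀ with |S₀| ≤ k such that the pairwise intersection of the label sets of any two of these Z chosen nodes equals S₀. -/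

import Mathlib

private lemma aux_chain {X : Type*} [DecidableEq X] (Z : ℕ) :
    ∀ (k : ℕ) (S : ℕ → Finset X),
      (∀ i, i < Z ^ k → (S i).card ≤ k) →
      (∀ i j₁ j₂ : ℕ, i < j₁ → j₁ < j₂ → j₂ < Z ^ k → S i ∩ S j₂ ⊆ S i ∩ S j₁) →
      (∃ x, ∀ i, i < Z ^ k → x ∈ S i) →
      ∃ (p : Fin Z → ℕ) (S₀ : Finset X), StrictMono p ∧ (∀ i, p i < Z ^ k) ∧
        (∀ i, S₀ ⊆ S (p i)) ∧ ∀ i j : Fin Z, i ≠ j → S (p i) ∩ S (p j) = S₀ := by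
  intro k
  induction k with
  | zero =>
    rintro S hcard _ ⟨x, hx⟩
    have h0 : x ∈ S 0 := hx 0 (by simp)
    have : (S 0).card ≤ 0 := hcard 0 (by simp)
    simp [Finset.card_eq_zero.mp (Nat.le_zero.mp this)] at h0
  | succ k ih =>
    rintro S hcard hlam ⟨x, hx⟩
    rcases Nat.eq_zero_or_pos Z with hZ | hZ
    · subst hZ
      exact ⟨Fin.elim0, ∅, by intro a; exact a.elim0, fun a => a.elim0,
        fun a => a.elim0, fun a => a.elim0⟩
    have hZk : 0 < Z ^ k := pow_pos hZ k
    have hN : 0 < Z ^ (k+1) := pow_pos hZ _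
    have hNlt : Z ^ (k+1) - 1 < Z ^ (k+1) := Nat.sub_lt hN one_pos
    set C : Finset X := S 0 ∩ S (Z ^ (k+1) - 1) with hCdef
    have hxC : x ∈ C := Finset.mem_inter.mpr ⟨hx 0 hN, hx _ hNlt⟩
    have hC : ∀ q, q < Z ^ (k+1) → C ⊆ S q := by
      intro q hq
      rcases Nat.eq_zero_or_pos q with h0 | h0
      · subst h0; exact Finset.inter_subset_left
      rcases eq_or_lt_of_le (Nat.le_sub_one_of_lt hq) with he | hlt
      · rw [he]; exact Finset.inter_subset_right
      · exact (hlam 0 q (Z ^ (k+1) - 1) h0 hlt hNlt).trans Finset.inter_subset_right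
    have hmlt : ∀ j, j < Z → j * Z ^ k < Z ^ (k+1) := by
      intro j hj
      calc j * Z ^ k < Z * Z ^ k := (Nat.mul_lt_mul_right hZk).mpr hj
        _ = Z ^ (k+1) := by ring
    by_cases hcase : ∀ j, j + 1 < Z → S (j * Z ^ k) ∩ S ((j+1) * Z ^ k) = C
    · -- all consecutive block endpoints intersect in C
      have key : ∀ a b : ℕ, a < b → b < Z → S (a * Z ^ k) ∩ S (b * Z ^ k) = C := by
        intro a b hab hb
        apply subset_antisymm
        · rcases eq_or_lt_of_le (Nat.succ_le_of_lt hab) with he | hlt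
          · rw [← he]; exact (hcase a (by omega)).le
          · have h1 : a * Z ^ k < (a+1) * Z ^ k := (Nat.mul_lt_mul_right hZk).mpr (Nat.lt_succ_self a)
            have h2 : (a+1) * Z ^ k < b * Z ^ k := (Nat.mul_lt_mul_right hZk).mpr hlt
            have := hlam (a * Z ^ k) ((a+1) * Z ^ k) (b * Z ^ k) h1 h2 (hmlt b hb)
            exact this.trans (hcase a (lt_trans hlt hb)).le
        · exact Finset.subset_inter (hC _ (hmlt a (lt_trans hab hb))) (hC _ (hmlt b hb))
      refine ⟨fun i => (i : ℕ) * Z ^ k, C, ?_, ?_, ?_, ?_⟩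
      · intro a b hab; exact (Nat.mul_lt_mul_right hZk).mpr hab
      · intro i; exact hmlt i i.isLt
      · intro i; exact hC _ (hmlt i i.isLt)
      · intro i j hij
        rcases lt_or_gt_of_ne hij with h | h
        · exact key i j h j.isLt
        · rw [Finset.inter_comm]; exact key j i h i.isLt
    · -- some block endpoints intersect in more than C: recurse inside that block
      push_neg at hcase
      obtain ⟨j, hj, hne⟩ := hcase
      have hjZ : j < Z := lt_trans (Nat.lt_succ_self j) hj
      have hb1 : j * Z ^ k < Z ^ (k+1) := hmlt j hjZ
      have hb2 : (j+1) * Z ^ k < Z ^ (k+1) := hmlt (j+1) hj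
      have hmul : (j+1) * Z ^ k = j * Z ^ k + Z ^ k := by ring
      have hsub : C ⊆ S (j * Z ^ k) ∩ S ((j+1) * Z ^ k) :=
        Finset.subset_inter (hC _ hb1) (hC _ hb2)
      obtain ⟨x', hx'mem, hx'C⟩ := Finset.exists_of_ssubset (hsub.ssubset_of_ne (Ne.symm hne))
      have hx'' : ∀ q, j * Z ^ k ≤ q → q ≤ (j+1) * Z ^ k → x' ∈ S q := by
        intro q h1 h2
        rcases eq_or_lt_of_le h1 with he | h1
        · rw [← he]; exact Finset.mem_of_mem_inter_left hx'mem
        rcases eq_or_lt_of_le h2 with he | h2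
        · rw [he]; exact Finset.mem_of_mem_inter_right hx'mem
        · exact Finset.mem_of_mem_inter_right
            (hlam (j * Z ^ k) q ((j+1) * Z ^ k) h1 h2 hb2 hx'mem)
      have hC1 : 1 ≤ C.card := Finset.card_pos.mpr ⟨x, hxC⟩
      obtain ⟨p', S₀', hmono', hlt', hsub', hpair'⟩ :=
        ih (fun q => S (j * Z ^ k + q) \ C)
          (by
            intro q hq
            have hlt : j * Z ^ k + q < Z ^ (k+1) := by
              apply lt_of_lt_of_le _ hb2.le
              omega
            have hCs := hC _ hlt
            rw [Finset.card_sdiff_of_subset hCs]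
            have := hcard _ hlt
            omega)
          (by
            intro a b₁ b₂ h1 h2 h3
            have hlt : j * Z ^ k + b₂ < Z ^ (k+1) := by
              apply lt_of_lt_of_le _ hb2.le
              omega
            have hl := hlam (j * Z ^ k + a) (j * Z ^ k + b₁) (j * Z ^ k + b₂)
              (by omega) (by omega) hlt
            intro y hy
            simp only [Finset.mem_inter, Finset.mem_sdiff] at hy ⊢
            obtain ⟨⟨hya, hyC⟩, hyb, -⟩ := hy
            have := hl (Finset.mem_inter.mpr ⟨hya, hyb⟩)
            exact ⟨⟨hya, hyC⟩, Finset.mem_of_mem_inter_right this, hyC⟩)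
          ⟨x', by
            intro q hq
            refine Finset.mem_sdiff.mpr ⟨hx'' _ (Nat.le_add_right _ _) ?_, hx'C⟩
            omega⟩
      refine ⟨fun i => j * Z ^ k + p' i, S₀' ∪ C, ?_, ?_, ?_, ?_⟩
      · intro a b hab
        show j * Z ^ k + p' a < j * Z ^ k + p' b
        exact Nat.add_lt_add_left (hmono' hab) _
      · intro i
        have := hlt' i
        show j * Z ^ k + p' i < Z ^ (k+1)
        apply lt_of_lt_of_le _ hb2.le
        omega
      · intro i
        show S₀' ∪ C ⊆ S (j * Z ^ k + p' i)
        have hpi : j * Z ^ k + p' i < Z ^ (k+1) := by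
          have := hlt' i
          apply lt_of_lt_of_le _ hb2.le
          omega
        apply Finset.union_subset _ (hC _ hpi)
        exact (hsub' i).trans Finset.sdiff_subset
      · intro i i' hii
        show S (j * Z ^ k + p' i) ∩ S (j * Z ^ k + p' i') = S₀' ∪ C
        have hpi : ∀ i : Fin Z, j * Z ^ k + p' i < Z ^ (k+1) := by
          intro i
          have := hlt' i
          apply lt_of_lt_of_le _ hb2.le
          omega
        have h1 : (S (j * Z ^ k + p' i) ∩ S (j * Z ^ k + p' i')) \ C = S₀' := by
          rw [← hpair' i i' hii]
          ext y
          simp only [Finset.mem_inter, Finset.mem_sdiff]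
          tauto
        have h2 : C ⊆ S (j * Z ^ k + p' i) ∩ S (j * Z ^ k + p' i') :=
          Finset.subset_inter (hC _ (hpi i)) (hC _ (hpi i'))
        calc S (j * Z ^ k + p' i) ∩ S (j * Z ^ k + p' i')
            = (S (j * Z ^ k + p' i) ∩ S (j * Z ^ k + p' i')) \ C ∪ C :=
              (Finset.sdiff_union_of_subset h2).symm
          _ = S₀' ∪ C := by rw [h1]

/-- Combinatorial content of the same-intersection lemma: given `Z^k` sets
`S 1, …, S (Z^k)` of size at most `k` along a root-to-leaf path satisfying the
laminar-path condition, whose common intersection is nonempty, there are `Z`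
of them whose pairwise intersections all equal one common set `S₀` of size at
most `k`. -/
theorem same_intersection_of_long_path {X : Type*} [DecidableEq X] (k Z : ℕ)
    (S : Fin (Z ^ k) → Finset X)
    (hcard : ∀ i, (S i).Nonempty ∧ (S i).card ≤ k)
    (hlam : ∀ i j₁ j₂ : Fin (Z ^ k), i < j₁ → j₁ < j₂ → S i ∩ S j₂ ⊆ S i ∩ S j₁)
    (hint : ∃ x, ∀ i, x ∈ S i) :
    ∃ (p : Fin Z → Fin (Z ^ k)) (S₀ : Finset X), StrictMono p ∧ S₀.card ≤ k ∧
      ∀ i j : Fin Z, i ≠ j → S (p i) ∩ S (p j) = S₀ := by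
  rcases Nat.eq_zero_or_pos Z with hZ | hZ
  · subst hZ
    exact ⟨Fin.elim0, ∅, by intro a; exact a.elim0, by simp, fun i => i.elim0⟩
  obtain ⟨x, hx⟩ := hint
  set S' : ℕ → Finset X := fun n => if h : n < Z ^ k then S ⟨n, h⟩ else ∅ with hS'def
  obtain ⟨p, S₀, hmono, hlt, hsub, hpair⟩ := aux_chain Z k S'
    (by
      intro i hi
      simp only [hS'def, dif_pos hi]
      exact (hcard ⟨i, hi⟩).2)
    (by
      intro i j₁ j₂ h1 h2 h3
      have hi : i < Z ^ k := by omega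
      have hj1 : j₁ < Z ^ k := by omega
      simp only [hS'def, dif_pos hi, dif_pos hj1, dif_pos h3]
      exact hlam ⟨i, hi⟩ ⟨j₁, hj1⟩ ⟨j₂, h3⟩ h1 h2)
    ⟨x, by
      intro i hi
      simp only [hS'def, dif_pos hi]
      exact hx ⟨i, hi⟩⟩
  have hSe : ∀ i : Fin Z, S' (p i) = S ⟨p i, hlt i⟩ := fun i => dif_pos (hlt i)
  refine ⟨fun i => ⟨p i, hlt i⟩, S₀, ?_, ?_, ?_⟩
  · intro a b hab
    exact Fin.mk_lt_mk.mpr (hmono hab)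
  · have h0 : S₀ ⊆ S ⟨p ⟨0, hZ⟩, hlt ⟨0, hZ⟩⟩ := (hSe ⟨0, hZ⟩) ▸ hsub ⟨0, hZ⟩
    exact le_trans (Finset.card_le_card h0) (hcard _).2
  · intro i j hij
    have := hpair i j hij
    rwa [hSe i, hSe j] at this
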